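/- Bilinearity of the Young integral: under the hypotheses α + β > 1, the map (x, y) ↦ ∫₀^T x dy (the Young integral defined via the sewing lemma) is bilinear in (x, y) and satisfies the bound |∫₀^T x dy − x_0(y_T − y_0)| ≤ C‖x‖_{α-Höl}‖y‖_{β-Höl}T^{α+β}, where C depends only on α + β. In particular, the Young integration map is continuous from (α-Hölder paths) × (β-Hölder paths) to V. -/

import Mathlib

open Filter Finset Set Topology

section Young

variable {U V : Type} [NormedAddCommGroup U] [NormedSpace ℝ U]
  [NormedAddCommGroup V] [NormedSpace ℝ V]

/-- grid point -/
noncomputable def gp (k : ℕ) (a b : ℝ) (i : ℕ) : ℝ := a + i * ((b - a) / k)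

/-- uniform Riemann sum with `k` intervals -/
noncomputable def RS (x : ℝ → U →L[ℝ] V) (y : ℝ → U) (k : ℕ) (a b : ℝ) : V :=
  ∑ i ∈ Finset.range k, x (gp k a b i) (y (gp k a b (i+1)) - y (gp k a b i))

lemma gp_zero (k : ℕ) (a b : ℝ) : gp k a b 0 = a := by simp [gp]

lemma gp_last (k : ℕ) (hk : k ≠ 0) (a b : ℝ) : gp k a b k = b := by
  have : (k : ℝ) ≠ 0 := Nat.cast_ne_zero.2 hk
  unfold gp
  rw [mul_comm, div_mul_cancel₀ _ this]
  ring

lemma gp_one (a b : ℝ) : gp 1 a b 1 = b := by simp [gp]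

lemma gp_mono (k : ℕ) {a b : ℝ} (hab : a ≤ b) {i j : ℕ} (hij : i ≤ j) :
    gp k a b i ≤ gp k a b j := by
  have h1 : (0:ℝ) ≤ (b - a) / k := by
    apply div_nonneg (by linarith) (Nat.cast_nonneg k)
  have h2 : (i:ℝ) ≤ (j:ℝ) := Nat.cast_le.2 hij
  unfold gp
  nlinarith

lemma gp_ge_left (k : ℕ) {a b : ℝ} (hab : a ≤ b) (i : ℕ) : a ≤ gp k a b i := by
  simpa [gp_zero] using gp_mono k hab (Nat.zero_le i)

lemma gp_le_right {k : ℕ} {a b : ℝ} (hab : a ≤ b) {i : ℕ} (hik : i ≤ k) :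
    gp k a b i ≤ b := by
  rcases Nat.eq_zero_or_pos k with hk | hk
  · subst hk; simp [gp]; linarith
  · have := gp_mono k hab hik
    rwa [gp_last k hk.ne'] at this

lemma gp_succ_sub (k : ℕ) (a b : ℝ) (i : ℕ) :
    gp k a b (i+1) - gp k a b i = (b - a) / k := by
  simp [gp]; ring

lemma RS_self (x : ℝ → U →L[ℝ] V) (y : ℝ → U) (k : ℕ) (a : ℝ) :
    RS x y k a a = 0 := by
  unfold RS
  apply Finset.sum_eq_zero
  intro i _
  simp [gp]

lemma RS_one (x : ℝ → U →L[ℝ] V) (y : ℝ → U) (a b : ℝ) :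
    RS x y 1 a b = x a (y b - y a) := by
  simp [RS, gp_zero, gp_one]

/-- subdivision identity -/
lemma RS_mul (x : ℝ → U →L[ℝ] V) (y : ℝ → U) (n m : ℕ) (a b : ℝ) :
    RS x y (n * m) a b
      = ∑ i ∈ Finset.range n, RS x y m (gp n a b i) (gp n a b (i+1)) := by
  induction n generalizing b with
  | zero => simp [RS]
  | succ n ih =>
    rcases Nat.eq_zero_or_pos m with hm | hm
    · subst hm; simp [RS]
    have hm' : (m:ℝ) ≠ 0 := Nat.cast_ne_zero.2 hm.ne'
    have hn1 : ((n:ℝ) + 1) ≠ 0 := by positivity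
    set c : ℝ := gp (n+1) a b n with hc
    have key1 : n ≠ 0 → ∀ j : ℕ, gp ((n+1) * m) a b j = gp (n * m) a c j := by
      intro hn j
      have hn' : (n:ℝ) ≠ 0 := Nat.cast_ne_zero.2 hn
      unfold gp
      simp only [hc, gp]
      push_cast
      field_simp
      ring
    have key2 : ∀ l : ℕ, gp ((n+1) * m) a b (n * m + l) = gp m c b l := by
      intro l
      unfold gp
      simp only [hc, gp]
      push_cast
      field_simp
      ring
    have hsplit : RS x y ((n+1) * m) a b
        = (∑ j ∈ Finset.range (n*m),
            x (gp ((n+1)*m) a b j) (y (gp ((n+1)*m) a b (j+1)) - y (gp ((n+1)*m) a b j)))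
          + ∑ l ∈ Finset.range m,
            x (gp ((n+1)*m) a b (n*m+l)) (y (gp ((n+1)*m) a b (n*m+l+1)) - y (gp ((n+1)*m) a b (n*m+l))) := by
      unfold RS
      rw [show (n+1) * m = n * m + m by ring, Finset.sum_range_add]
    have e1 : (∑ j ∈ Finset.range (n*m),
            x (gp ((n+1)*m) a b j) (y (gp ((n+1)*m) a b (j+1)) - y (gp ((n+1)*m) a b j)))
        = RS x y (n*m) a c := by
      unfold RS
      apply Finset.sum_congr rfl
      intro j hj
      rw [Finset.mem_range] at hj
      have hn : n ≠ 0 := by rintro rfl; simp at hj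
      rw [key1 hn j, key1 hn (j+1)]
    have e2 : (∑ l ∈ Finset.range m,
            x (gp ((n+1)*m) a b (n*m+l)) (y (gp ((n+1)*m) a b (n*m+l+1)) - y (gp ((n+1)*m) a b (n*m+l))))
        = RS x y m c (gp (n+1) a b (n+1)) := by
      have hb : gp (n+1) a b (n+1) = b := gp_last (n+1) (Nat.succ_ne_zero n) a b
      rw [hb]
      unfold RS
      apply Finset.sum_congr rfl
      intro l _
      rw [show n*m+l+1 = n*m+(l+1) by ring, key2 l, key2 (l+1)]
    have e3 : ∀ i : ℕ, i < n → gp (n+1) a b i = gp n a c i := by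
      intro i hi
      have hn : n ≠ 0 := by omega
      have hn' : (n:ℝ) ≠ 0 := Nat.cast_ne_zero.2 hn
      simp only [hc, gp]
      push_cast
      field_simp
      ring
    rw [hsplit, e1, e2, ih c, Finset.sum_range_succ]
    congr 1
    apply Finset.sum_congr rfl
    intro i hi
    rw [Finset.mem_range] at hi
    rw [e3 i hi]
    rcases Nat.lt_or_ge (i+1) n with h | h
    · rw [e3 (i+1) h]
    · have : i + 1 = n := by omega
      rw [this, hc]
      congr 1
      have hn' : (n:ℝ) ≠ 0 := Nat.cast_ne_zero.2 (by omega)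
      simp only [gp]
      push_cast
      field_simp
      ring


/-- Bundled Hölder hypotheses. -/
structure YH (α β T Cx Cy : ℝ) (x : ℝ → U →L[ℝ] V) (y : ℝ → U) : Prop where
  ha : 0 < α
  hb : 0 < β
  hCx : 0 ≤ Cx
  hCy : 0 ≤ Cy
  hx : ∀ s t : ℝ, 0 ≤ s → s ≤ t → t ≤ T → ‖x t - x s‖ ≤ Cx * (t - s) ^ α
  hy : ∀ s t : ℝ, 0 ≤ s → s ≤ t → t ≤ T → ‖y t - y s‖ ≤ Cy * (t - s) ^ β

variable {α β T Cx Cy : ℝ} {x : ℝ → U →L[ℝ] V} {y : ℝ → U}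

/-- crude bound for a uniform sum against the single increment -/
lemma RS_sub_mu_le (H : YH α β T Cx Cy x y) {a b : ℝ} {k : ℕ} (hk : k ≠ 0)
    (h0 : 0 ≤ a) (hab : a ≤ b) (hbT : b ≤ T) :
    ‖RS x y k a b - x a (y b - y a)‖
      ≤ (k : ℝ) * (Cx * (b - a) ^ α * (Cy * ((b - a) / k) ^ β)) := by
  have htel : y b - y a = ∑ i ∈ Finset.range k, (y (gp k a b (i+1)) - y (gp k a b i)) := by
    rw [Finset.sum_range_sub (fun i => y (gp k a b i)), gp_last k hk, gp_zero]
  have hmu : x a (y b - y a)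
      = ∑ i ∈ Finset.range k, x a (y (gp k a b (i+1)) - y (gp k a b i)) := by
    rw [htel, map_sum]
  have hdiff : RS x y k a b - x a (y b - y a)
      = ∑ i ∈ Finset.range k,
          (x (gp k a b i) - x a) (y (gp k a b (i+1)) - y (gp k a b i)) := by
    rw [hmu, RS, ← Finset.sum_sub_distrib]
    simp [ContinuousLinearMap.sub_apply]
  rw [hdiff]
  calc ‖∑ i ∈ Finset.range k,
          (x (gp k a b i) - x a) (y (gp k a b (i+1)) - y (gp k a b i))‖
      ≤ ∑ i ∈ Finset.range k,
          ‖(x (gp k a b i) - x a) (y (gp k a b (i+1)) - y (gp k a b i))‖ :=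
        norm_sum_le _ _
    _ ≤ ∑ _i ∈ Finset.range k, Cx * (b - a) ^ α * (Cy * ((b - a) / k) ^ β) := by
        apply Finset.sum_le_sum
        intro i hi
        rw [Finset.mem_range] at hi
        have hik : i ≤ k := hi.le
        have hik1 : i + 1 ≤ k := hi
        have hga : a ≤ gp k a b i := gp_ge_left k hab i
        have hgb : gp k a b i ≤ b := gp_le_right hab hik
        have hgg : gp k a b i ≤ gp k a b (i+1) := gp_mono k hab (Nat.le_succ i)
        have hgb1 : gp k a b (i+1) ≤ b := gp_le_right hab hik1
        have h1 : ‖x (gp k a b i) - x a‖ ≤ Cx * (gp k a b i - a) ^ α :=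
          H.hx a (gp k a b i) h0 hga (le_trans hgb hbT)
        have h2 : ‖y (gp k a b (i+1)) - y (gp k a b i)‖
            ≤ Cy * ((b - a) / k) ^ β := by
          have := H.hy (gp k a b i) (gp k a b (i+1)) (le_trans h0 hga) hgg
            (le_trans hgb1 hbT)
          rwa [gp_succ_sub] at this
        have h3 : Cx * (gp k a b i - a) ^ α ≤ Cx * (b - a) ^ α := by
          apply mul_le_mul_of_nonneg_left _ H.hCx
          exact Real.rpow_le_rpow (by linarith) (by linarith) H.ha.le
        calc ‖(x (gp k a b i) - x a) (y (gp k a b (i+1)) - y (gp k a b i))‖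
            ≤ ‖x (gp k a b i) - x a‖ * ‖y (gp k a b (i+1)) - y (gp k a b i)‖ :=
              ContinuousLinearMap.le_opNorm _ _
          _ ≤ (Cx * (b - a) ^ α) * (Cy * ((b - a) / k) ^ β) := by
              apply mul_le_mul (le_trans h1 h3) h2 (norm_nonneg _)
                (mul_nonneg H.hCx (Real.rpow_nonneg (by linarith) _))
    _ = (k : ℝ) * (Cx * (b - a) ^ α * (Cy * ((b - a) / k) ^ β)) := by
        rw [Finset.sum_const, Finset.card_range, nsmul_eq_mul]

/-- midpoint defect for two intervals -/
lemma RS_two_sub_mu (H : YH α β T Cx Cy x y) {u v : ℝ}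
    (h0 : 0 ≤ u) (huv : u ≤ v) (hvT : v ≤ T) :
    ‖RS x y 2 u v - x u (y v - y u)‖
      ≤ Cx * ((v - u) / 2) ^ α * (Cy * ((v - u) / 2) ^ β) := by
  set m : ℝ := gp 2 u v 1 with hm
  have hmu : m - u = (v - u) / 2 := by simp only [hm, gp]; push_cast; ring
  have hvm : v - m = (v - u) / 2 := by simp only [hm, gp]; push_cast; ring
  have hum : u ≤ m := by simpa [gp_zero] using gp_mono 2 huv (Nat.zero_le 1)
  have hmv : m ≤ v := gp_le_right huv (by norm_num)
  have key : RS x y 2 u v - x u (y v - y u) = (x m - x u) (y v - y m) := by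
    have h2 : gp 2 u v 2 = v := gp_last 2 (by norm_num) u v
    simp only [RS, Finset.sum_range_succ, Finset.range_one, Finset.sum_singleton,
      gp_zero, h2, ← hm, ContinuousLinearMap.sub_apply]
    have hA : x u (y m - y u) - x u (y v - y u) = -(x u (y v - y m)) := by
      rw [← map_sub, ← map_neg]
      congr 1
      abel
    calc x u (y m - y u) + x m (y v - y m) - x u (y v - y u)
        = x m (y v - y m) + (x u (y m - y u) - x u (y v - y u)) := by abel
      _ = x m (y v - y m) - x u (y v - y m) := by rw [hA]; abel
  rw [key]
  calc ‖(x m - x u) (y v - y m)‖ ≤ ‖x m - x u‖ * ‖y v - y m‖ :=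
        ContinuousLinearMap.le_opNorm _ _
    _ ≤ (Cx * ((v - u) / 2) ^ α) * (Cy * ((v - u) / 2) ^ β) := by
        have h1 := H.hx u m h0 hum (le_trans hmv hvT)
        have h2 := H.hy m v (le_trans h0 hum) hmv hvT
        rw [hmu] at h1; rw [hvm] at h2
        apply mul_le_mul h1 h2 (norm_nonneg _)
        exact mul_nonneg H.hCx (Real.rpow_nonneg (by linarith : (0:ℝ) ≤ (v - u) / 2) _)

lemma geom_est {α β d : ℝ} (ha : 0 < α) (hb : 0 < β) (hd : 0 ≤ d) (j c : ℕ) (hjc : j ≤ c) :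
    ((2:ℝ)^j : ℝ) * ((d / 2^c) ^ α * (d / 2^c) ^ β)
      ≤ d ^ (α + β) * ((2:ℝ) ^ ((1:ℝ) - (α + β))) ^ j := by
  rcases eq_or_lt_of_le hd with h | hd0
  · rw [← h]
    simp [Real.zero_rpow ha.ne', Real.zero_rpow hb.ne',
      Real.zero_rpow (by linarith : (0:ℝ) < α + β).ne']
  · have hD : (0:ℝ) < 2 ^ c := by positivity
    have e1 : (d / 2^c) ^ α * (d / 2^c) ^ β = (d / 2^c) ^ (α + β) :=
      (Real.rpow_add (by positivity) α β).symm
    have e2 : (d / 2^c) ^ (α + β) = d ^ (α + β) / ((2:ℝ)^c) ^ (α + β) :=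
      Real.div_rpow hd (le_of_lt hD) _
    have e3 : ((2:ℝ)^c) ^ (α + β) = (2:ℝ) ^ ((c:ℝ) * (α + β)) := by
      rw [← Real.rpow_natCast 2 c, ← Real.rpow_mul (by norm_num)]
    have e4 : ((2:ℝ)^j : ℝ) = (2:ℝ) ^ ((j:ℝ)) := by
      rw [Real.rpow_natCast]
    have e5 : ((2:ℝ) ^ ((1:ℝ) - (α + β))) ^ j = (2:ℝ) ^ (((1:ℝ) - (α + β)) * j) := by
      rw [← Real.rpow_natCast ((2:ℝ) ^ ((1:ℝ) - (α + β))) j, ← Real.rpow_mul (by norm_num)]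
    rw [e1, e2, e3, e4, e5]
    rw [div_eq_mul_inv, ← Real.rpow_neg (by norm_num : (0:ℝ) ≤ 2)]
    have h2 : (2:ℝ)^((j:ℝ)) * (2:ℝ)^(-((c:ℝ)*(α+β))) ≤ (2:ℝ)^(((1:ℝ)-(α+β))*(j:ℝ)) := by
      rw [← Real.rpow_add (by norm_num : (0:ℝ) < 2)]
      apply (Real.rpow_le_rpow_left_iff (by norm_num : (1:ℝ) < 2)).2
      have hjc' : (j:ℝ) ≤ (c:ℝ) := Nat.cast_le.2 hjc
      have hab : 0 < α + β := by linarith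
      nlinarith
    calc (2:ℝ)^((j:ℝ)) * (d ^ (α+β) * (2:ℝ)^(-((c:ℝ)*(α+β))))
        = d ^ (α+β) * ((2:ℝ)^((j:ℝ)) * (2:ℝ)^(-((c:ℝ)*(α+β)))) := by ring
      _ ≤ d ^ (α+β) * (2:ℝ)^(((1:ℝ)-(α+β))*(j:ℝ)) :=
          mul_le_mul_of_nonneg_left h2 (Real.rpow_nonneg hd _)


variable [CompleteSpace V]

/-- the Young integral over `[a,b]`: limit of dyadic uniform Riemann sums -/
noncomputable def Xi (x : ℝ → U →L[ℝ] V) (y : ℝ → U) (a b : ℝ) : V :=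
  letI : Nonempty V := ⟨0⟩
  limUnder atTop (fun j : ℕ => RS x y (2^j) a b)

lemma dist_RS_step (H : YH α β T Cx Cy x y) {a b : ℝ}
    (h0 : 0 ≤ a) (hab : a ≤ b) (hbT : b ≤ T) (j : ℕ) :
    dist (RS x y (2^j) a b) (RS x y (2^(j+1)) a b)
      ≤ (Cx * Cy * (b - a) ^ (α + β)) * ((2:ℝ) ^ ((1:ℝ) - (α + β))) ^ j := by
  have hfj : RS x y (2^j) a b
      = ∑ i ∈ Finset.range (2^j),
          x (gp (2^j) a b i) (y (gp (2^j) a b (i+1)) - y (gp (2^j) a b i)) := rfl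
  have hfj1 : RS x y (2^(j+1)) a b
      = ∑ i ∈ Finset.range (2^j), RS x y 2 (gp (2^j) a b i) (gp (2^j) a b (i+1)) := by
    rw [pow_succ]
    exact RS_mul x y (2^j) 2 a b
  rw [dist_eq_norm, hfj, hfj1, ← Finset.sum_sub_distrib]
  have hgap : ∀ i : ℕ, gp (2^j) a b (i+1) - gp (2^j) a b i = (b-a)/2^j := by
    intro i
    rw [gp_succ_sub]
    norm_num
  calc ‖∑ i ∈ Finset.range (2^j),
        (x (gp (2^j) a b i) (y (gp (2^j) a b (i+1)) - y (gp (2^j) a b i))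
          - RS x y 2 (gp (2^j) a b i) (gp (2^j) a b (i+1)))‖
      ≤ ∑ i ∈ Finset.range (2^j),
        ‖RS x y 2 (gp (2^j) a b i) (gp (2^j) a b (i+1))
          - x (gp (2^j) a b i) (y (gp (2^j) a b (i+1)) - y (gp (2^j) a b i))‖ := by
        refine le_trans (norm_sum_le _ _) (le_of_eq (Finset.sum_congr rfl ?_))
        intro i _
        rw [norm_sub_rev]
    _ ≤ ∑ _i ∈ Finset.range (2^j),
          Cx * ((b-a)/2^(j+1)) ^ α * (Cy * ((b-a)/2^(j+1)) ^ β) := by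
        apply Finset.sum_le_sum
        intro i hi
        rw [Finset.mem_range] at hi
        have h1 : 0 ≤ gp (2^j) a b i := le_trans h0 (gp_ge_left _ hab i)
        have h2 : gp (2^j) a b i ≤ gp (2^j) a b (i+1) := gp_mono _ hab (Nat.le_succ i)
        have h3 : gp (2^j) a b (i+1) ≤ T := le_trans (gp_le_right hab hi) hbT
        have := RS_two_sub_mu H h1 h2 h3
        rw [hgap i] at this
        have hhalf : (b-a)/2^j/2 = (b-a)/2^(j+1) := by
          rw [pow_succ]; ring
        rwa [hhalf] at this
    _ = ((2:ℝ)^j) * (Cx * ((b-a)/2^(j+1)) ^ α * (Cy * ((b-a)/2^(j+1)) ^ β)) := by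
        rw [Finset.sum_const, Finset.card_range, nsmul_eq_mul]
        norm_num
    _ ≤ (Cx * Cy * (b - a) ^ (α + β)) * ((2:ℝ) ^ ((1:ℝ) - (α + β))) ^ j := by
        have hg := geom_est H.ha H.hb (by linarith : (0:ℝ) ≤ b - a) j (j+1) (Nat.le_succ j)
        calc ((2:ℝ)^j) * (Cx * ((b-a)/2^(j+1)) ^ α * (Cy * ((b-a)/2^(j+1)) ^ β))
            = (Cx * Cy) * (((2:ℝ)^j) * (((b-a)/2^(j+1)) ^ α * ((b-a)/2^(j+1)) ^ β)) := by
              ring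
          _ ≤ (Cx * Cy) * ((b-a) ^ (α+β) * ((2:ℝ) ^ ((1:ℝ) - (α + β))) ^ j) :=
              mul_le_mul_of_nonneg_left hg (mul_nonneg H.hCx H.hCy)
          _ = (Cx * Cy * (b - a) ^ (α + β)) * ((2:ℝ) ^ ((1:ℝ) - (α + β))) ^ j := by ring

lemma Xi_spec (H : YH α β T Cx Cy x y) (hab1 : 1 < α + β) {a b : ℝ}
    (h0 : 0 ≤ a) (hab : a ≤ b) (hbT : b ≤ T) :
    Tendsto (fun j : ℕ => RS x y (2^j) a b) atTop (𝓝 (Xi x y a b)) ∧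
    ∀ j : ℕ, dist (RS x y (2^j) a b) (Xi x y a b)
      ≤ (Cx * Cy * (b - a) ^ (α + β)) * ((2:ℝ) ^ ((1:ℝ) - (α + β))) ^ j
          / (1 - (2:ℝ) ^ ((1:ℝ) - (α + β))) := by
  letI : Nonempty V := ⟨0⟩
  set r : ℝ := (2:ℝ) ^ ((1:ℝ) - (α + β)) with hrdef
  set C0 : ℝ := Cx * Cy * (b - a) ^ (α + β) with hC0
  have hd : ∀ j : ℕ, dist (RS x y (2^j) a b) (RS x y (2^(j+1)) a b) ≤ C0 * r ^ j :=
    fun j => dist_RS_step H h0 hab hbT j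
  have hr : r < 1 :=
    Real.rpow_lt_one_of_one_lt_of_neg (by norm_num) (by linarith)
  have hcs : CauchySeq (fun j : ℕ => RS x y (2^j) a b) :=
    cauchySeq_of_le_geometric r C0 hr hd
  have ht : Tendsto (fun j : ℕ => RS x y (2^j) a b) atTop (𝓝 (Xi x y a b)) :=
    hcs.tendsto_limUnder
  exact ⟨ht, fun j => dist_le_of_le_geometric_of_tendsto r C0 hr hd ht j⟩

lemma Xi_self (x : ℝ → U →L[ℝ] V) (y : ℝ → U) (a : ℝ) : Xi x y a a = 0 := by
  letI : Nonempty V := ⟨0⟩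
  apply Filter.Tendsto.limUnder_eq
  simp only [RS_self]
  exact tendsto_const_nhds

lemma Xi_sub_mu (H : YH α β T Cx Cy x y) (hab1 : 1 < α + β) {a b : ℝ}
    (h0 : 0 ≤ a) (hab : a ≤ b) (hbT : b ≤ T) :
    ‖Xi x y a b - x a (y b - y a)‖
      ≤ (1 - (2:ℝ) ^ ((1:ℝ) - (α + β)))⁻¹ * Cx * Cy * (b - a) ^ (α + β) := by
  have h := (Xi_spec H hab1 h0 hab hbT).2 0
  rw [pow_zero, RS_one, dist_eq_norm, norm_sub_rev] at h
  calc ‖Xi x y a b - x a (y b - y a)‖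
      ≤ (Cx * Cy * (b - a) ^ (α + β)) * ((2:ℝ) ^ ((1:ℝ) - (α + β))) ^ (0:ℕ)
          / (1 - (2:ℝ) ^ ((1:ℝ) - (α + β))) := h
    _ = (1 - (2:ℝ) ^ ((1:ℝ) - (α + β)))⁻¹ * Cx * Cy * (b - a) ^ (α + β) := by
        rw [pow_zero]
        ring

lemma geom_est' {α β d : ℝ} (ha : 0 < α) (hb : 0 < β) (hd : 0 ≤ d) (j : ℕ) :
    ((2:ℝ)^j : ℝ) * ((d / 2^j) ^ α * (d / 2^j) ^ β)
      ≤ d ^ (α + β) * ((2:ℝ) ^ ((1:ℝ) - (α + β))) ^ j :=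
  geom_est ha hb hd j j le_rfl

lemma tendsto_RS_mul (H : YH α β T Cx Cy x y) (hab1 : 1 < α + β) {a b : ℝ}
    (h0 : 0 ≤ a) (hab : a ≤ b) (hbT : b ≤ T) {k : ℕ} (hk : k ≠ 0) :
    Tendsto (fun j : ℕ => RS x y (k * 2^j) a b) atTop (𝓝 (Xi x y a b)) := by
  have hr0 : (0:ℝ) ≤ (2:ℝ) ^ ((1:ℝ) - (α + β)) := Real.rpow_nonneg (by norm_num) _
  have hr : (2:ℝ) ^ ((1:ℝ) - (α + β)) < 1 :=
    Real.rpow_lt_one_of_one_lt_of_neg (by norm_num) (by linarith)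
  have hdiff : ∀ j : ℕ, ‖RS x y (k * 2^j) a b - RS x y (2^j) a b‖
      ≤ ((k:ℝ) * (Cx * Cy)) * ((b - a) ^ (α + β) * ((2:ℝ) ^ ((1:ℝ) - (α + β))) ^ j) := by
    intro j
    have e1 : RS x y (k * 2^j) a b = ∑ i ∈ Finset.range (2^j),
        RS x y k (gp (2^j) a b i) (gp (2^j) a b (i+1)) := by
      rw [mul_comm]
      exact RS_mul x y (2^j) k a b
    have e2 : RS x y (2^j) a b = ∑ i ∈ Finset.range (2^j),
        x (gp (2^j) a b i) (y (gp (2^j) a b (i+1)) - y (gp (2^j) a b i)) := rfl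
    rw [e1, e2, ← Finset.sum_sub_distrib]
    have hh : (0:ℝ) ≤ (b - a)/2^j := div_nonneg (by linarith) (by positivity)
    calc ‖∑ i ∈ Finset.range (2^j), (RS x y k (gp (2^j) a b i) (gp (2^j) a b (i+1))
            - x (gp (2^j) a b i) (y (gp (2^j) a b (i+1)) - y (gp (2^j) a b i)))‖
        ≤ ∑ i ∈ Finset.range (2^j), ‖RS x y k (gp (2^j) a b i) (gp (2^j) a b (i+1))
            - x (gp (2^j) a b i) (y (gp (2^j) a b (i+1)) - y (gp (2^j) a b i))‖ :=
          norm_sum_le _ _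
      _ ≤ ∑ _i ∈ Finset.range (2^j),
            (k:ℝ) * (Cx * ((b-a)/2^j) ^ α * (Cy * ((b-a)/2^j) ^ β)) := by
          apply Finset.sum_le_sum
          intro i hi
          rw [Finset.mem_range] at hi
          have h1 : 0 ≤ gp (2^j) a b i := le_trans h0 (gp_ge_left _ hab i)
          have h2 : gp (2^j) a b i ≤ gp (2^j) a b (i+1) := gp_mono _ hab (Nat.le_succ i)
          have h3 : gp (2^j) a b (i+1) ≤ T := le_trans (gp_le_right hab hi) hbT
          have hb1 := RS_sub_mu_le H hk h1 h2 h3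
          rw [gp_succ_sub] at hb1
          push_cast at hb1 ⊢
          refine le_trans hb1 ?_
          have hk1 : (1:ℝ) ≤ (k:ℝ) := by
            exact_mod_cast Nat.one_le_iff_ne_zero.2 hk
          have hbd : ((b-a)/2^j/k) ^ β ≤ ((b-a)/2^j) ^ β := by
            apply Real.rpow_le_rpow (by positivity) _ H.hb.le
            exact div_le_self hh hk1
          have hstep : Cy * ((b-a)/2^j/k) ^ β ≤ Cy * ((b-a)/2^j) ^ β :=
            mul_le_mul_of_nonneg_left hbd H.hCy
          have hstep2 : Cx * ((b-a)/2^j) ^ α * (Cy * ((b-a)/2^j/k) ^ β)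
              ≤ Cx * ((b-a)/2^j) ^ α * (Cy * ((b-a)/2^j) ^ β) :=
            mul_le_mul_of_nonneg_left hstep
              (mul_nonneg H.hCx (Real.rpow_nonneg hh _))
          exact mul_le_mul_of_nonneg_left hstep2 (Nat.cast_nonneg k)
      _ = ((k:ℝ) * (Cx * Cy)) * ((2:ℝ)^j * (((b-a)/2^j) ^ α * ((b-a)/2^j) ^ β)) := by
          rw [Finset.sum_const, Finset.card_range, nsmul_eq_mul]
          push_cast
          ring
      _ ≤ ((k:ℝ) * (Cx * Cy)) * ((b - a) ^ (α + β) * ((2:ℝ) ^ ((1:ℝ) - (α + β))) ^ j) := by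
          exact mul_le_mul_of_nonneg_left
            (geom_est' H.ha H.hb (by linarith : (0:ℝ) ≤ b - a) j)
            (mul_nonneg (Nat.cast_nonneg k) (mul_nonneg H.hCx H.hCy))
  have hzero : Tendsto (fun j : ℕ => RS x y (k * 2^j) a b - RS x y (2^j) a b)
      atTop (𝓝 0) := by
    apply squeeze_zero_norm hdiff
    have : Tendsto (fun j : ℕ => ((2:ℝ) ^ ((1:ℝ) - (α + β))) ^ j) atTop (𝓝 0) :=
      tendsto_pow_atTop_nhds_zero_of_lt_one hr0 hr
    have := (this.const_mul (((k:ℝ) * (Cx * Cy)) * (b - a) ^ (α + β)))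
    simp only [mul_zero] at this
    convert this using 2 with j
    ring
  have hXi := (Xi_spec H hab1 h0 hab hbT).1
  have := hzero.add hXi
  rw [zero_add] at this
  convert this using 2 with j
  abel

lemma Xi_grid (H : YH α β T Cx Cy x y) (hab1 : 1 < α + β) {a b : ℝ}
    (h0 : 0 ≤ a) (hab : a ≤ b) (hbT : b ≤ T) {k : ℕ} (hk : k ≠ 0) :
    Xi x y a b = ∑ i ∈ Finset.range k, Xi x y (gp k a b i) (gp k a b (i+1)) := by
  have h1 := tendsto_RS_mul H hab1 h0 hab hbT hk
  have h2 : Tendsto (fun j : ℕ => RS x y (k * 2^j) a b) atTop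
      (𝓝 (∑ i ∈ Finset.range k, Xi x y (gp k a b i) (gp k a b (i+1)))) := by
    have he : ∀ j : ℕ, RS x y (k * 2^j) a b
        = ∑ i ∈ Finset.range k, RS x y (2^j) (gp k a b i) (gp k a b (i+1)) :=
      fun j => RS_mul x y k (2^j) a b
    simp only [he]
    apply tendsto_finset_sum
    intro i hi
    rw [Finset.mem_range] at hi
    have hga : 0 ≤ gp k a b i := le_trans h0 (gp_ge_left _ hab i)
    have hgg : gp k a b i ≤ gp k a b (i+1) := gp_mono _ hab (Nat.le_succ i)
    have hgb : gp k a b (i+1) ≤ T := le_trans (gp_le_right hab hi) hbT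
    exact (Xi_spec H hab1 hga hgg hgb).1
  exact tendsto_nhds_unique h1 h2


lemma Xi_rat (H : YH α β T Cx Cy x y) (hab1 : 1 < α + β) {a c : ℝ}
    (h0 : 0 ≤ a) (hac : a ≤ c) (hcT : c ≤ T) {p q : ℕ} (hq : q ≠ 0) (hpq : p ≤ q) :
    Xi x y a c = Xi x y a (gp q a c p) + Xi x y (gp q a c p) c := by
  rcases Nat.eq_zero_or_pos p with hp0 | hp0
  · subst hp0
    rw [gp_zero, Xi_self, zero_add]
  rcases eq_or_lt_of_le hpq with hpq' | hplt
  · subst hpq'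
    rw [gp_last p hp0.ne', Xi_self, add_zero]
  obtain ⟨d, rfl⟩ : ∃ d, q = p + d := ⟨q - p, by omega⟩
  have hd0 : d ≠ 0 := by omega
  have hq' : ((p:ℝ) + (d:ℝ)) ≠ 0 := by positivity
  have hp' : (p:ℝ) ≠ 0 := Nat.cast_ne_zero.2 hp0.ne'
  have hd' : (d:ℝ) ≠ 0 := Nat.cast_ne_zero.2 hd0
  set b : ℝ := gp (p+d) a c p with hbdef
  have hab : a ≤ b := gp_ge_left (p+d) hac p
  have hbc : b ≤ c := gp_le_right hac hpq
  have hbT : b ≤ T := le_trans hbc hcT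
  have hmain := Xi_grid H hab1 h0 hac hcT hq
  rw [Finset.sum_range_add (fun i => Xi x y (gp (p+d) a c i) (gp (p+d) a c (i+1))) p d]
    at hmain
  have hgrid1 : Xi x y a b
      = ∑ i ∈ Finset.range p, Xi x y (gp (p+d) a c i) (gp (p+d) a c (i+1)) := by
    rw [Xi_grid H hab1 h0 hab hbT hp0.ne']
    apply Finset.sum_congr rfl
    intro i _
    have hg : ∀ m : ℕ, gp p a b m = gp (p+d) a c m := by
      intro m
      simp only [hbdef, gp]
      push_cast
      field_simp
      ring
    rw [hg i, hg (i+1)]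
  have hgrid2 : Xi x y b c = ∑ i ∈ Finset.range d,
      Xi x y (gp (p+d) a c (p+i)) (gp (p+d) a c (p+i+1)) := by
    rw [Xi_grid H hab1 (le_trans h0 hab) hbc hcT hd0]
    apply Finset.sum_congr rfl
    intro i _
    have hg : ∀ m : ℕ, gp d b c m = gp (p+d) a c (p+m) := by
      intro m
      simp only [hbdef, gp]
      push_cast
      field_simp
      ring
    rw [hg i, hg (i+1), show p + i + 1 = p + (i+1) by ring]
  rw [hmain, hgrid1, hgrid2]

/-- Hölder implies continuity on the interval. -/
lemma holder_contOn {E : Type*} [NormedAddCommGroup E] {f : ℝ → E} {c γ T : ℝ}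
    (hγ : 0 < γ)
    (h : ∀ s t : ℝ, 0 ≤ s → s ≤ t → t ≤ T → ‖f t - f s‖ ≤ c * (t - s) ^ γ) :
    ContinuousOn f (Set.Icc 0 T) := by
  intro v hv
  have hbound : ∀ u ∈ Set.Icc (0:ℝ) T, dist (f u) (f v) ≤ c * |u - v| ^ γ := by
    intro u hu
    rcases le_total u v with huv | huv
    · rw [dist_eq_norm, norm_sub_rev]
      have := h u v hu.1 huv hv.2
      rwa [show |u - v| = v - u by rw [abs_of_nonpos (by linarith)]; ring]
    · rw [dist_eq_norm]
      have := h v u hv.1 huv hu.2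
      rwa [show |u - v| = u - v by rw [abs_of_nonneg (by linarith)]]
  have hlim : Tendsto (fun u => c * |u - v| ^ γ) (𝓝[Set.Icc 0 T] v) (𝓝 0) := by
    have h1 : Tendsto (fun u : ℝ => |u - v|) (𝓝[Set.Icc 0 T] v) (𝓝 0) := by
      have : Tendsto (fun u : ℝ => |u - v|) (𝓝 v) (𝓝 |v - v|) := by
        apply Continuous.tendsto
        continuity
      simp only [sub_self, abs_zero] at this
      exact this.mono_left nhdsWithin_le_nhds
    have h2 : Tendsto (fun t : ℝ => c * t ^ γ) (𝓝 0) (𝓝 (c * (0:ℝ) ^ γ)) := by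
      apply Tendsto.const_mul
      exact (Real.continuousAt_rpow_const 0 γ (Or.inr hγ.le)).tendsto
    rw [Real.zero_rpow hγ.ne', mul_zero] at h2
    exact h2.comp h1
  rw [ContinuousWithinAt, tendsto_iff_dist_tendsto_zero]
  apply squeeze_zero' (Filter.Eventually.of_forall fun u => dist_nonneg)
    _ hlim
  filter_upwards [self_mem_nhdsWithin] with u hu
  exact hbound u hu

lemma contOn_RS_right (H : YH α β T Cx Cy x y) {a c : ℝ}
    (h0 : 0 ≤ a) (hac : a ≤ c) (hcT : c ≤ T) (k : ℕ) :
    ContinuousOn (fun u => RS x y k a u) (Set.Icc a c) := by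
  have hxc : ContinuousOn x (Set.Icc 0 T) := holder_contOn H.ha H.hx
  have hyc : ContinuousOn y (Set.Icc 0 T) := holder_contOn H.hb H.hy
  apply continuousOn_finset_sum
  intro i hi
  rw [Finset.mem_range] at hi
  have hmaps : ∀ m : ℕ, m ≤ k →
      Set.MapsTo (fun u => gp k a u m) (Set.Icc a c) (Set.Icc 0 T) := by
    intro m hm u hu
    constructor
    · exact le_trans h0 (gp_ge_left k hu.1 m)
    · exact le_trans (le_trans (gp_le_right hu.1 hm) hu.2) hcT
  have hgcont : ∀ m : ℕ, Continuous (fun u => gp k a u m) := by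
    intro m
    unfold gp
    fun_prop
  have hX : ContinuousOn (fun u => x (gp k a u i)) (Set.Icc a c) :=
    hxc.comp (hgcont i).continuousOn (hmaps i hi.le)
  have hY1 : ContinuousOn (fun u => y (gp k a u (i+1))) (Set.Icc a c) :=
    hyc.comp (hgcont (i+1)).continuousOn (hmaps (i+1) hi)
  have hY2 : ContinuousOn (fun u => y (gp k a u i)) (Set.Icc a c) :=
    hyc.comp (hgcont i).continuousOn (hmaps i hi.le)
  exact hX.clm_apply (hY1.sub hY2)

lemma contOn_RS_left (H : YH α β T Cx Cy x y) {a c : ℝ}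
    (h0 : 0 ≤ a) (hac : a ≤ c) (hcT : c ≤ T) (k : ℕ) :
    ContinuousOn (fun u => RS x y k u c) (Set.Icc a c) := by
  have hxc : ContinuousOn x (Set.Icc 0 T) := holder_contOn H.ha H.hx
  have hyc : ContinuousOn y (Set.Icc 0 T) := holder_contOn H.hb H.hy
  apply continuousOn_finset_sum
  intro i hi
  rw [Finset.mem_range] at hi
  have hmaps : ∀ m : ℕ, m ≤ k →
      Set.MapsTo (fun u => gp k u c m) (Set.Icc a c) (Set.Icc 0 T) := by
    intro m hm u hu
    constructor
    · exact le_trans h0 (le_trans hu.1 (gp_ge_left k hu.2 m))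
    · exact le_trans (gp_le_right hu.2 hm) hcT
  have hgcont : ∀ m : ℕ, Continuous (fun u => gp k u c m) := by
    intro m
    unfold gp
    fun_prop
  have hX : ContinuousOn (fun u => x (gp k u c i)) (Set.Icc a c) :=
    hxc.comp (hgcont i).continuousOn (hmaps i hi.le)
  have hY1 : ContinuousOn (fun u => y (gp k u c (i+1))) (Set.Icc a c) :=
    hyc.comp (hgcont (i+1)).continuousOn (hmaps (i+1) hi)
  have hY2 : ContinuousOn (fun u => y (gp k u c i)) (Set.Icc a c) :=
    hyc.comp (hgcont i).continuousOn (hmaps i hi.le)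
  exact hX.clm_apply (hY1.sub hY2)

lemma unif_aux (H : YH α β T Cx Cy x y) (hab1 : 1 < α + β) {a c : ℝ}
    (hac : a ≤ c) {ε : ℝ} (hε : 0 < ε) :
    ∀ᶠ j : ℕ in atTop,
      Cx * Cy * (c - a) ^ (α + β) * ((2:ℝ) ^ ((1:ℝ) - (α + β))) ^ j
        / (1 - (2:ℝ) ^ ((1:ℝ) - (α + β))) < ε := by
  have hr0 : (0:ℝ) ≤ (2:ℝ) ^ ((1:ℝ) - (α + β)) := Real.rpow_nonneg (by norm_num) _
  have hr : (2:ℝ) ^ ((1:ℝ) - (α + β)) < 1 :=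
    Real.rpow_lt_one_of_one_lt_of_neg (by norm_num) (by linarith)
  have h1 : Tendsto (fun j : ℕ =>
      Cx * Cy * (c - a) ^ (α + β) * ((2:ℝ) ^ ((1:ℝ) - (α + β))) ^ j
        / (1 - (2:ℝ) ^ ((1:ℝ) - (α + β)))) atTop (𝓝 0) := by
    have hp : Tendsto (fun j : ℕ => ((2:ℝ) ^ ((1:ℝ) - (α + β))) ^ j) atTop (𝓝 0) :=
      tendsto_pow_atTop_nhds_zero_of_lt_one hr0 hr
    have := (hp.const_mul (Cx * Cy * (c - a) ^ (α + β))).div_const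
      (1 - (2:ℝ) ^ ((1:ℝ) - (α + β)))
    simpa using this
  exact h1.eventually (gt_mem_nhds hε)

lemma contOn_Xi_right (H : YH α β T Cx Cy x y) (hab1 : 1 < α + β) {a c : ℝ}
    (h0 : 0 ≤ a) (hac : a ≤ c) (hcT : c ≤ T) :
    ContinuousOn (fun u => Xi x y a u) (Set.Icc a c) := by
  apply TendstoUniformlyOn.continuousOn (p := (atTop : Filter ℕ))
    (F := fun (j : ℕ) (u : ℝ) => RS x y (2^j) a u)
  · rw [Metric.tendstoUniformlyOn_iff]
    intro ε hε
    filter_upwards [unif_aux H hab1 hac hε] with j hj u hu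
    have hXs := (Xi_spec H hab1 h0 hu.1 (le_trans hu.2 hcT)).2 j
    rw [dist_comm]
    refine lt_of_le_of_lt (le_trans hXs ?_) hj
    have hden : (0:ℝ) < 1 - (2:ℝ) ^ ((1:ℝ) - (α + β)) := by
      have : (2:ℝ) ^ ((1:ℝ) - (α + β)) < 1 :=
        Real.rpow_lt_one_of_one_lt_of_neg (by norm_num) (by linarith)
      linarith
    have hr0 : (0:ℝ) ≤ (2:ℝ) ^ ((1:ℝ) - (α + β)) := Real.rpow_nonneg (by norm_num) _
    have key : (u - a) ^ (α+β) ≤ (c - a) ^ (α+β) :=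
      Real.rpow_le_rpow (by linarith [hu.1]) (by linarith [hu.2]) (by linarith)
    have hnum : Cx * Cy * (u - a) ^ (α+β) * ((2:ℝ) ^ ((1:ℝ) - (α + β))) ^ j
        ≤ Cx * Cy * (c - a) ^ (α+β) * ((2:ℝ) ^ ((1:ℝ) - (α + β))) ^ j := by
      apply mul_le_mul_of_nonneg_right _ (pow_nonneg hr0 j)
      exact mul_le_mul_of_nonneg_left key (mul_nonneg H.hCx H.hCy)
    rw [div_eq_mul_inv, div_eq_mul_inv]
    exact mul_le_mul_of_nonneg_right hnum (inv_nonneg.2 hden.le)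
  · exact Filter.Frequently.of_forall fun j => contOn_RS_right H h0 hac hcT (2^j)

lemma contOn_Xi_left (H : YH α β T Cx Cy x y) (hab1 : 1 < α + β) {a c : ℝ}
    (h0 : 0 ≤ a) (hac : a ≤ c) (hcT : c ≤ T) :
    ContinuousOn (fun u => Xi x y u c) (Set.Icc a c) := by
  apply TendstoUniformlyOn.continuousOn (p := (atTop : Filter ℕ))
    (F := fun (j : ℕ) (u : ℝ) => RS x y (2^j) u c)
  · rw [Metric.tendstoUniformlyOn_iff]
    intro ε hε
    filter_upwards [unif_aux H hab1 hac hε] with j hj u hu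
    have hXs := (Xi_spec H hab1 (le_trans h0 hu.1) hu.2 hcT).2 j
    rw [dist_comm]
    refine lt_of_le_of_lt (le_trans hXs ?_) hj
    have hden : (0:ℝ) < 1 - (2:ℝ) ^ ((1:ℝ) - (α + β)) := by
      have : (2:ℝ) ^ ((1:ℝ) - (α + β)) < 1 :=
        Real.rpow_lt_one_of_one_lt_of_neg (by norm_num) (by linarith)
      linarith
    have hr0 : (0:ℝ) ≤ (2:ℝ) ^ ((1:ℝ) - (α + β)) := Real.rpow_nonneg (by norm_num) _
    have key : (c - u) ^ (α+β) ≤ (c - a) ^ (α+β) :=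
      Real.rpow_le_rpow (by linarith [hu.2]) (by linarith [hu.1]) (by linarith)
    have hnum : Cx * Cy * (c - u) ^ (α+β) * ((2:ℝ) ^ ((1:ℝ) - (α + β))) ^ j
        ≤ Cx * Cy * (c - a) ^ (α+β) * ((2:ℝ) ^ ((1:ℝ) - (α + β))) ^ j := by
      apply mul_le_mul_of_nonneg_right _ (pow_nonneg hr0 j)
      exact mul_le_mul_of_nonneg_left key (mul_nonneg H.hCx H.hCy)
    rw [div_eq_mul_inv, div_eq_mul_inv]
    exact mul_le_mul_of_nonneg_right hnum (inv_nonneg.2 hden.le)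
  · exact Filter.Frequently.of_forall fun j => contOn_RS_left H h0 hac hcT (2^j)


lemma Xi_add (H : YH α β T Cx Cy x y) (hab1 : 1 < α + β) {a b c : ℝ}
    (h0 : 0 ≤ a) (hab : a ≤ b) (hbc : b ≤ c) (hcT : c ≤ T) :
    Xi x y a b + Xi x y b c = Xi x y a c := by
  rcases eq_or_lt_of_le (le_trans hab hbc) with hac | hac
  · have hba : b = a := le_antisymm (by rw [hac]; exact hbc) hab
    rw [hba, ← hac, Xi_self, add_zero]
  set lam : ℝ := (b - a)/(c - a) with hlam
  have hca : (0:ℝ) < c - a := by linarith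
  have hlam0 : 0 ≤ lam := div_nonneg (by linarith) hca.le
  have hlam1 : lam ≤ 1 := (div_le_one hca).2 (by linarith)
  set u : ℕ → ℝ := fun n => gp (n+1) a c (⌊lam * (n+1)⌋₊) with hu
  have hple : ∀ n : ℕ, ⌊lam * (n+1)⌋₊ ≤ n+1 := by
    intro n
    have h1 : lam * ((n:ℝ)+1) ≤ ((n+1:ℕ):ℝ) := by
      push_cast
      nlinarith [Nat.cast_nonneg (α := ℝ) n]
    calc ⌊lam * ((n:ℝ)+1)⌋₊ ≤ ⌊((n+1:ℕ):ℝ)⌋₊ := Nat.floor_le_floor h1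
      _ = n+1 := Nat.floor_natCast _
  have hmem : ∀ n, u n ∈ Set.Icc a c := fun n =>
    ⟨gp_ge_left _ hac.le _, gp_le_right hac.le (hple n)⟩
  have hrat : ∀ n, Xi x y a c = Xi x y a (u n) + Xi x y (u n) c :=
    fun n => Xi_rat H hab1 h0 hac.le hcT (Nat.succ_ne_zero n) (hple n)
  have hconv : Tendsto u atTop (𝓝 b) := by
    rw [tendsto_iff_dist_tendsto_zero]
    apply squeeze_zero (fun n => dist_nonneg) (g := fun n : ℕ => (c - a) * (1/((n:ℝ)+1)))
    · intro n
      have hpos : (0:ℝ) < (n:ℝ) + 1 := by positivity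
      have hfl1 : ((⌊lam * ((n:ℝ)+1)⌋₊ : ℕ) : ℝ) ≤ lam * ((n:ℝ)+1) :=
        Nat.floor_le (by positivity)
      have hfl2 : lam * ((n:ℝ)+1) - 1 < ((⌊lam * ((n:ℝ)+1)⌋₊ : ℕ) : ℝ) :=
        Nat.sub_one_lt_floor _
      have hb' : b - a = lam * (c - a) := by
        rw [hlam]
        field_simp
      have hdist : dist (u n) b
          = |((((⌊lam * ((n:ℝ)+1)⌋₊ : ℕ):ℝ) - lam*((n:ℝ)+1))/((n:ℝ)+1)) * (c-a)| := by
        rw [Real.dist_eq]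
        congr 1
        have : b = a + lam * (c - a) := by linarith
        rw [this]
        simp only [hu, gp]
        push_cast
        field_simp
        ring
      rw [hdist, abs_mul]
      have h2 : |(((⌊lam * ((n:ℝ)+1)⌋₊ : ℕ):ℝ) - lam*((n:ℝ)+1))/((n:ℝ)+1)| ≤ 1/((n:ℝ)+1) := by
        rw [abs_div, abs_of_pos hpos, div_le_div_iff_of_pos_right]
        · rw [abs_le]
          constructor <;> [linarith; linarith]
        · exact hpos
      have h3 : |c - a| = c - a := abs_of_pos hca
      rw [h3]
      calc |(((⌊lam * ((n:ℝ)+1)⌋₊ : ℕ):ℝ) - lam*((n:ℝ)+1))/((n:ℝ)+1)| * (c-a)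
          ≤ (1/((n:ℝ)+1)) * (c-a) := mul_le_mul_of_nonneg_right h2 hca.le
        _ = (c-a) * (1/((n:ℝ)+1)) := by ring
    · have h4 := tendsto_one_div_add_atTop_nhds_zero_nat.const_mul (c - a)
      simpa using h4
  have hcont : ContinuousOn (fun v => Xi x y a v + Xi x y v c) (Set.Icc a c) :=
    (contOn_Xi_right H hab1 h0 hac.le hcT).add (contOn_Xi_left H hab1 h0 hac.le hcT)
  have hbmem : b ∈ Set.Icc a c := ⟨hab, hbc⟩
  have htend : Tendsto (fun n => Xi x y a (u n) + Xi x y (u n) c) atTop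
      (𝓝 (Xi x y a b + Xi x y b c)) := by
    have hc := (hcont b hbmem).tendsto
    apply hc.comp
    rw [tendsto_nhdsWithin_iff]
    exact ⟨hconv, Filter.Eventually.of_forall hmem⟩
  have hconst : Tendsto (fun n => Xi x y a (u n) + Xi x y (u n) c) atTop
      (𝓝 (Xi x y a c)) := by
    have he : (fun n => Xi x y a (u n) + Xi x y (u n) c) = fun _ => Xi x y a c :=
      funext fun n => (hrat n).symm
    rw [he]
    exact tendsto_const_nhds
  exact tendsto_nhds_unique htend hconst


lemma Xi_eq_of_tendsto {a b : ℝ} {L : V}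
    (h : Tendsto (fun j : ℕ => RS x y (2^j) a b) atTop (𝓝 L)) :
    Xi x y a b = L := by
  letI : Nonempty V := ⟨0⟩
  exact h.limUnder_eq

lemma RS_add_left (x₁ x₂ : ℝ → U →L[ℝ] V) (y : ℝ → U) (k : ℕ) (a b : ℝ) :
    RS (x₁ + x₂) y k a b = RS x₁ y k a b + RS x₂ y k a b := by
  simp [RS, Finset.sum_add_distrib, ContinuousLinearMap.add_apply]

lemma RS_smul_left (c : ℝ) (x : ℝ → U →L[ℝ] V) (y : ℝ → U) (k : ℕ) (a b : ℝ) :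
    RS (c • x) y k a b = c • RS x y k a b := by
  simp only [RS, Finset.smul_sum]
  apply Finset.sum_congr rfl
  intro i _
  rw [Pi.smul_apply, ContinuousLinearMap.smul_apply]

lemma RS_add_right (x : ℝ → U →L[ℝ] V) (y₁ y₂ : ℝ → U) (k : ℕ) (a b : ℝ) :
    RS x (y₁ + y₂) k a b = RS x y₁ k a b + RS x y₂ k a b := by
  simp only [RS, ← Finset.sum_add_distrib]
  apply Finset.sum_congr rfl
  intro i _
  rw [Pi.add_apply, Pi.add_apply,
    show y₁ (gp k a b (i+1)) + y₂ (gp k a b (i+1)) - (y₁ (gp k a b i) + y₂ (gp k a b i))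
      = (y₁ (gp k a b (i+1)) - y₁ (gp k a b i)) + (y₂ (gp k a b (i+1)) - y₂ (gp k a b i))
      by abel, map_add]

lemma RS_smul_right (c : ℝ) (x : ℝ → U →L[ℝ] V) (y : ℝ → U) (k : ℕ) (a b : ℝ) :
    RS x (c • y) k a b = c • RS x y k a b := by
  simp only [RS, Finset.smul_sum]
  apply Finset.sum_congr rfl
  intro i _
  rw [Pi.smul_apply, Pi.smul_apply, ← smul_sub, map_smul]

end Young

/-- `f` is `γ`-Hölder on `[0,T]` (with some constant). -/
def HolOn {E : Type*} [NormedAddCommGroup E] (T γ : ℝ) (f : ℝ → E) : Prop :=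
  ∃ c : ℝ, 0 ≤ c ∧ ∀ s t : ℝ, 0 ≤ s → s ≤ t → t ≤ T → ‖f t - f s‖ ≤ c * (t - s) ^ γ

/-- Bilinearity and continuity of the Young integral
`(x,y) ↦ ∫₀^T x dy` defined by the sewing lemma, with the bound
`‖∫₀^T x dy - x₀(y_T - y₀)‖ ≤ C‖x‖_α‖y‖_β T^{α+β}`, `C` depending only on
`α + β`. -/
theorem young_integral_bilinear (α β : ℝ)
    (hα : α ∈ Set.Ioc (0:ℝ) 1) (hβ : β ∈ Set.Ioc (0:ℝ) 1) (hαβ : 1 < α + β) :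
    ∃ C : ℝ, 0 < C ∧
      ∀ (U : Type) [NormedAddCommGroup U] [NormedSpace ℝ U] [CompleteSpace U]
        (V : Type) [NormedAddCommGroup V] [NormedSpace ℝ V] [CompleteSpace V]
        (T : ℝ), 0 < T →
        ∃ J : (ℝ → U →L[ℝ] V) → (ℝ → U) → V,
          -- `J x y` is the endpoint value of the path given by the sewing lemma,
          -- and satisfies the quantitative bound
          (∀ (x : ℝ → U →L[ℝ] V) (y : ℝ → U) (Cx Cy : ℝ), 0 ≤ Cx → 0 ≤ Cy →
            (∀ s t : ℝ, 0 ≤ s → s ≤ t → t ≤ T → ‖x t - x s‖ ≤ Cx * (t - s) ^ α) →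
            (∀ s t : ℝ, 0 ≤ s → s ≤ t → t ≤ T → ‖y t - y s‖ ≤ Cy * (t - s) ^ β) →
            (∃ I : ℝ → V, I 0 = 0 ∧ I T = J x y ∧
              ∀ s t : ℝ, 0 ≤ s → s ≤ t → t ≤ T →
                ‖I t - I s - x s (y t - y s)‖ ≤ C * Cx * Cy * (t - s) ^ (α + β)) ∧
            ‖J x y - x 0 (y T - y 0)‖ ≤ C * Cx * Cy * T ^ (α + β)) ∧
          -- bilinearity in the integrand
          (∀ x₁ x₂ : ℝ → U →L[ℝ] V, ∀ y : ℝ → U,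
            HolOn T α x₁ → HolOn T α x₂ → HolOn T β y →
            J (x₁ + x₂) y = J x₁ y + J x₂ y) ∧
          (∀ (c : ℝ) (x : ℝ → U →L[ℝ] V) (y : ℝ → U),
            HolOn T α x → HolOn T β y → J (c • x) y = c • J x y) ∧
          -- bilinearity in the integrator
          (∀ (x : ℝ → U →L[ℝ] V) (y₁ y₂ : ℝ → U),
            HolOn T α x → HolOn T β y₁ → HolOn T β y₂ →
            J x (y₁ + y₂) = J x y₁ + J x y₂) ∧
          (∀ (c : ℝ) (x : ℝ → U →L[ℝ] V) (y : ℝ → U),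
            HolOn T α x → HolOn T β y → J x (c • y) = c • J x y) := by
  obtain ⟨hα0, hα1⟩ := hα
  obtain ⟨hβ0, hβ1⟩ := hβ
  have hr : (2:ℝ) ^ ((1:ℝ) - (α + β)) < 1 :=
    Real.rpow_lt_one_of_one_lt_of_neg (by norm_num) (by linarith)
  refine ⟨(1 - (2:ℝ) ^ ((1:ℝ) - (α + β)))⁻¹, inv_pos.2 (by linarith), ?_⟩
  intro U _ _ _ V _ _ _ T hT
  refine ⟨fun x y => Xi x y 0 T, ?_, ?_, ?_, ?_, ?_⟩
  · -- quantitative bounds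
    intro x y Cx Cy hCx hCy hx hy
    have H : YH α β T Cx Cy x y := ⟨hα0, hβ0, hCx, hCy, hx, hy⟩
    constructor
    · refine ⟨fun t => Xi x y 0 t, Xi_self x y 0, rfl, ?_⟩
      intro s t hs hst htT
      have hsplit := Xi_add H hαβ le_rfl hs hst htT
      have he : Xi x y 0 t - Xi x y 0 s = Xi x y s t := by
        rw [← hsplit]; abel
      calc ‖Xi x y 0 t - Xi x y 0 s - x s (y t - y s)‖
          = ‖Xi x y s t - x s (y t - y s)‖ := by rw [he]
        _ ≤ _ := Xi_sub_mu H hαβ hs hst htT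
    · have h2 := Xi_sub_mu H hαβ le_rfl hT.le le_rfl
      rwa [sub_zero] at h2
  · -- additivity in the integrand
    intro x₁ x₂ y hx1 hx2 hy
    obtain ⟨c1, hc1, hh1⟩ := hx1
    obtain ⟨c2, hc2, hh2⟩ := hx2
    obtain ⟨cy, hcy, hhy⟩ := hy
    have H1 : YH α β T c1 cy x₁ y := ⟨hα0, hβ0, hc1, hcy, hh1, hhy⟩
    have H2 : YH α β T c2 cy x₂ y := ⟨hα0, hβ0, hc2, hcy, hh2, hhy⟩
    have t1 := (Xi_spec H1 hαβ le_rfl hT.le le_rfl).1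
    have t2 := (Xi_spec H2 hαβ le_rfl hT.le le_rfl).1
    apply Xi_eq_of_tendsto
    have h3 : (fun j : ℕ => RS (x₁ + x₂) y (2^j) 0 T)
        = fun j : ℕ => RS x₁ y (2^j) 0 T + RS x₂ y (2^j) 0 T :=
      funext fun j => RS_add_left x₁ x₂ y (2^j) 0 T
    rw [h3]
    exact t1.add t2
  · -- scalars in the integrand
    intro c x y hx hy
    obtain ⟨cx, hcx, hhx⟩ := hx
    obtain ⟨cy, hcy, hhy⟩ := hy
    have H1 : YH α β T cx cy x y := ⟨hα0, hβ0, hcx, hcy, hhx, hhy⟩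
    have t1 := (Xi_spec H1 hαβ le_rfl hT.le le_rfl).1
    apply Xi_eq_of_tendsto
    have h3 : (fun j : ℕ => RS (c • x) y (2^j) 0 T)
        = fun j : ℕ => c • RS x y (2^j) 0 T :=
      funext fun j => RS_smul_left c x y (2^j) 0 T
    rw [h3]
    exact t1.const_smul c
  · -- additivity in the integrator
    intro x y₁ y₂ hx hy1 hy2
    obtain ⟨cx, hcx, hhx⟩ := hx
    obtain ⟨c1, hc1, hh1⟩ := hy1
    obtain ⟨c2, hc2, hh2⟩ := hy2
    have H1 : YH α β T cx c1 x y₁ := ⟨hα0, hβ0, hcx, hc1, hhx, hh1⟩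
    have H2 : YH α β T cx c2 x y₂ := ⟨hα0, hβ0, hcx, hc2, hhx, hh2⟩
    have t1 := (Xi_spec H1 hαβ le_rfl hT.le le_rfl).1
    have t2 := (Xi_spec H2 hαβ le_rfl hT.le le_rfl).1
    apply Xi_eq_of_tendsto
    have h3 : (fun j : ℕ => RS x (y₁ + y₂) (2^j) 0 T)
        = fun j : ℕ => RS x y₁ (2^j) 0 T + RS x y₂ (2^j) 0 T :=
      funext fun j => RS_add_right x y₁ y₂ (2^j) 0 T
    rw [h3]
    exact t1.add t2
  · -- scalars in the integrator
    intro c x y hx hy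
    obtain ⟨cx, hcx, hhx⟩ := hx
    obtain ⟨cy, hcy, hhy⟩ := hy
    have H1 : YH α β T cx cy x y := ⟨hα0, hβ0, hcx, hcy, hhx, hhy⟩
    have t1 := (Xi_spec H1 hαβ le_rfl hT.le le_rfl).1
    apply Xi_eq_of_tendsto
    have h3 : (fun j : ℕ => RS x (c • y) (2^j) 0 T)
        = fun j : ℕ => c • RS x y (2^j) 0 T :=
      funext fun j => RS_smul_right c x y (2^j) 0 T
    rw [h3]
    exact t1.const_smul c
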